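/- Let A be a shuffling mechanism on S_n. Suppose for every prior on the true permutation σ, every i, j ∈ [n], and every released σ', the posterior odds bound Pr[σ ∈ Σ_{i,j} | σ'] ≤ e^α Pr[σ ∈ Σ_{i,j}] and Pr[σ ∈ Σ_{i,j}] ≤ e^α Pr[σ ∈ Σ_{i,j} | σ'] hold. Then A must satisfy Pr[σ' | σ_a] ≤ e^α Pr[σ' | σ_b] for all pairs of distinct permutations σ_a, σ_b and all outputs σ', i.e. A is (α, Ĝ)-dσ-private for the full group assignment. -/

import Mathlib

open scoped ENNReal BigOperators

set_option maxHeartbeats 2000000 in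
/-- necessity: if for every prior `π` on the true permutation, every
`i, j` and every released `σ'`, the posterior probability of `Σ_{i,j} = {σ : σ i = j}`
is within a factor `e^{±α}` of its prior, then the shuffling mechanism `Q` must satisfy
`Q σa σ' ≤ e^α · Q σb σ'` for all distinct `σa, σb` — i.e. it is `(α, Ĝ)`-dσ-private for
the full group assignment. -/
theorem definetti_resistance_needs_full_shuffle {n : ℕ}
    (Q : Equiv.Perm (Fin n) → PMF (Equiv.Perm (Fin n))) (α : ℝ)
    (hpost : ∀ π : PMF (Equiv.Perm (Fin n)), ∀ i j : Fin n, ∀ σ' : Equiv.Perm (Fin n),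
      (∑ σ : Equiv.Perm (Fin n), π σ * Q σ σ') ≠ 0 →
      ENNReal.ofReal (Real.exp (-α)) *
          (∑ σ ∈ Finset.univ.filter (fun σ : Equiv.Perm (Fin n) => σ i = j), π σ)
        ≤ (∑ σ ∈ Finset.univ.filter (fun σ : Equiv.Perm (Fin n) => σ i = j), π σ * Q σ σ') /
            (∑ σ : Equiv.Perm (Fin n), π σ * Q σ σ')
      ∧ (∑ σ ∈ Finset.univ.filter (fun σ : Equiv.Perm (Fin n) => σ i = j), π σ * Q σ σ') /
            (∑ σ : Equiv.Perm (Fin n), π σ * Q σ σ')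
          ≤ ENNReal.ofReal (Real.exp α) *
              (∑ σ ∈ Finset.univ.filter (fun σ : Equiv.Perm (Fin n) => σ i = j), π σ)) :
    ∀ σa σb σ' : Equiv.Perm (Fin n), σa ≠ σb →
      Q σa σ' ≤ ENNReal.ofReal (Real.exp α) * Q σb σ' := by
  intro σa σb σ' hne
  set E : ℝ≥0∞ := ENNReal.ofReal (Real.exp α) with hE
  have hE0 : E ≠ 0 := by
    exact (ENNReal.ofReal_pos.mpr (Real.exp_pos α)).ne'
  have hEtop : E ≠ ⊤ := ENNReal.ofReal_ne_top
  by_cases hQa : Q σa σ' = 0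
  · simp [hQa]
  -- choose a coordinate where σa and σb differ
  have hex : ∃ i : Fin n, σa i ≠ σb i := by
    by_contra h
    push_neg at h
    exact hne (Equiv.ext h)
  obtain ⟨i, hi⟩ := hex
  -- key step: for every 0 < p ≤ 1
  have key : ∀ p : ℝ≥0∞, p ≠ 0 → p ≤ 1 →
      Q σa σ' ≤ E * (p * Q σa σ' + (1 - p) * Q σb σ') := by
    intro p hp0 hp1
    have hptop : p ≠ ⊤ := ne_top_of_le_ne_top ENNReal.one_ne_top hp1
    set f : Equiv.Perm (Fin n) → ℝ≥0∞ :=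
      fun σ => if σ = σa then p else if σ = σb then 1 - p else 0 with hf
    have hsum : ∑ σ : Equiv.Perm (Fin n), f σ = 1 := by
      rw [← Finset.sum_subset (Finset.subset_univ ({σa, σb} : Finset _))
        (by intro x _ hx
            simp only [Finset.mem_insert, Finset.mem_singleton, not_or] at hx
            simp [hf, hx.1, hx.2])]
      rw [Finset.sum_pair hne]
      simp [hf, hne, Ne.symm hne, add_tsub_cancel_of_le hp1]
    set π : PMF (Equiv.Perm (Fin n)) := PMF.ofFintype f hsum with hπ
    have hπa : π σa = p := by simp [hπ, hf]
    have hπb : π σb = 1 - p := by simp [hπ, hf, Ne.symm hne]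
    have hπo : ∀ σ, σ ≠ σa → σ ≠ σb → π σ = 0 := by
      intro σ h1 h2; simp [hπ, hf, h1, h2]
    -- the denominator
    have hD : (∑ σ : Equiv.Perm (Fin n), π σ * Q σ σ')
        = p * Q σa σ' + (1 - p) * Q σb σ' := by
      rw [← Finset.sum_subset (Finset.subset_univ ({σa, σb} : Finset _))
        (by intro x _ hx
            simp only [Finset.mem_insert, Finset.mem_singleton, not_or] at hx
            rw [hπo x hx.1 hx.2, zero_mul])]
      rw [Finset.sum_pair hne, hπa, hπb]
    -- the numerator
    have hN : (∑ σ ∈ Finset.univ.filter (fun σ : Equiv.Perm (Fin n) => σ i = σa i), π σ * Q σ σ')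
        = p * Q σa σ' := by
      rw [Finset.sum_eq_single σa]
      · rw [hπa]
      · intro σ hσ hσa
        rcases eq_or_ne σ σb with rfl | hσb
        · simp only [Finset.mem_filter] at hσ
          exact absurd hσ.2.symm hi
        · rw [hπo σ hσa hσb, zero_mul]
      · intro h
        exact absurd (h (Finset.mem_filter.mpr ⟨Finset.mem_univ σa, rfl⟩)) not_false
    have hNp : (∑ σ ∈ Finset.univ.filter (fun σ : Equiv.Perm (Fin n) => σ i = σa i), π σ)
        = p := by
      rw [Finset.sum_eq_single σa]
      · exact hπa
      · intro σ hσ hσa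
        rcases eq_or_ne σ σb with rfl | hσb
        · simp only [Finset.mem_filter] at hσ
          exact absurd hσ.2.symm hi
        · exact hπo σ hσa hσb
      · intro h
        exact absurd (h (Finset.mem_filter.mpr ⟨Finset.mem_univ σa, rfl⟩)) not_false
    have hD0 : (∑ σ : Equiv.Perm (Fin n), π σ * Q σ σ') ≠ 0 := by
      rw [hD]
      intro h
      rcases add_eq_zero.mp h with ⟨h1, _⟩
      rcases mul_eq_zero.mp h1 with h | h
      · exact hp0 h
      · exact hQa h
    have hDtop : (∑ σ : Equiv.Perm (Fin n), π σ * Q σ σ') ≠ ⊤ := by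
      rw [hD]
      exact ENNReal.add_ne_top.mpr
        ⟨ENNReal.mul_ne_top hptop (PMF.apply_ne_top _ _),
         ENNReal.mul_ne_top (ne_top_of_le_ne_top ENNReal.one_ne_top tsub_le_self)
           (PMF.apply_ne_top _ _)⟩
    have h2 := (hpost π i (σa i) σ' hD0).2
    rw [hN, hNp, ENNReal.div_le_iff hD0 hDtop, hD] at h2
    -- h2 : p * Q σa σ' ≤ E * p * (p * Qa + (1-p) * Qb)
    have h3 : p * Q σa σ' ≤ p * (E * (p * Q σa σ' + (1 - p) * Q σb σ')) := by
      calc p * Q σa σ' ≤ E * p * (p * Q σa σ' + (1 - p) * Q σb σ') := h2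
        _ = p * (E * (p * Q σa σ' + (1 - p) * Q σb σ')) := by ring
    exact (ENNReal.mul_le_mul_iff_right hp0 hptop).mp h3
  -- take p → 0
  refine ENNReal.le_of_forall_pos_le_add fun ε hε _ => ?_
  set p : ℝ≥0∞ := min 1 ((ε : ℝ≥0∞) / E) with hp
  have hε0 : (ε : ℝ≥0∞) ≠ 0 := by exact_mod_cast hε.ne'
  have hp0 : p ≠ 0 :=
    (lt_min zero_lt_one (pos_iff_ne_zero.mpr (ENNReal.div_ne_zero.mpr ⟨hε0, hEtop⟩))).ne'
  have hp1 : p ≤ 1 := min_le_left _ _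
  have h := key p hp0 hp1
  have hQa1 : Q σa σ' ≤ 1 := PMF.coe_le_one _ _
  calc Q σa σ' ≤ E * (p * Q σa σ' + (1 - p) * Q σb σ') := h
    _ ≤ E * (p * 1 + 1 * Q σb σ') := by
        gcongr
        exact tsub_le_self
    _ = E * Q σb σ' + E * p := by ring
    _ ≤ E * Q σb σ' + ε := by
        gcongr
        calc E * p ≤ E * ((ε : ℝ≥0∞) / E) := by gcongr; exact min_le_right _ _
          _ = ε := ENNReal.mul_div_cancel hE0 hEtop
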